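/- (Picone inequality for the p-Laplacian, pointwise form) Let $1<p<\infty$, and let $u\ge 0$, $v>0$ be real numbers with gradients (vectors) $\xi,\eta\in\mathbb{R}^n$. Then $|\xi|^p\ \ge\ |\eta|^{p-2}\eta\cdot\Big(\frac{p\,u^{p-1}}{v^{p-1}}\xi-\frac{(p-1)u^p}{v^p}\eta\Big)$, i.e., the pointwise Picone inequality $|\nabla u|^p\ge \nabla\big(\frac{u^p}{v^{p-1}}\big)\cdot|\nabla v|^{p-2}\nabla v$ holds. -/

import Mathlib

open Real

lemma young_aux {p : ℝ} (hp : 1 < p) {a b : ℝ} (ha : 0 ≤ a) (hb : 0 ≤ b) :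
    p * b ^ (p - 1) * a ≤ a ^ p + (p - 1) * b ^ p := by
  have hpq : p.HolderConjugate (p / (p - 1)) := .conjExponent hp
  have h := Real.young_inequality_of_nonneg ha (Real.rpow_nonneg hb (p - 1)) hpq
  have hp1 : (0:ℝ) < p - 1 := by linarith
  have hbp : (b ^ (p - 1)) ^ (p / (p - 1)) = b ^ p := by
    rw [← Real.rpow_mul hb]
    congr 1
    field_simp
  rw [hbp] at h
  have hq : p / (p - 1) > 0 := by positivity
  have := mul_le_mul_of_nonneg_left h (le_of_lt (by linarith : (0:ℝ) < p))
  calc p * b ^ (p - 1) * a = p * (a * b ^ (p - 1)) := by ring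
    _ ≤ p * (a ^ p / p + b ^ p / (p / (p - 1))) := by
        exact mul_le_mul_of_nonneg_left h (by linarith)
    _ = a ^ p + (p - 1) * b ^ p := by
        field_simp

theorem picone_pointwise (n : ℕ) (p : ℝ) (hp : 1 < p)
    (u v : ℝ) (hu : 0 ≤ u) (hv : 0 < v)
    (ξ η : EuclideanSpace ℝ (Fin n)) :
    (inner ℝ ((‖η‖ ^ (p - 2)) • η)
        ((p * u ^ (p - 1) / v ^ (p - 1)) • ξ - ((p - 1) * u ^ p / v ^ p) • η) : ℝ)
      ≤ ‖ξ‖ ^ p := by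
  by_cases hη : η = 0
  · simp [hη]
    positivity
  have hA : 0 < ‖η‖ := norm_pos_iff.mpr hη
  rw [real_inner_smul_left, inner_sub_right, real_inner_smul_right, real_inner_smul_right,
      real_inner_self_eq_norm_sq]
  have e1 : ‖η‖ ^ (p - 2) * ‖η‖ = ‖η‖ ^ (p - 1) := by
    rw [← Real.rpow_add_one hA.ne']; congr 1; ring
  have e2 : ‖η‖ ^ (p - 2) * ‖η‖ ^ 2 = ‖η‖ ^ p := by
    rw [← Real.rpow_natCast ‖η‖ 2, ← Real.rpow_add hA]; congr 1; push_cast; ring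
  have hb1 : (u * ‖η‖ / v) ^ (p - 1) = u ^ (p - 1) * ‖η‖ ^ (p - 1) / v ^ (p - 1) := by
    rw [Real.div_rpow (by positivity) hv.le, Real.mul_rpow hu (norm_nonneg _)]
  have hbp : (u * ‖η‖ / v) ^ p = u ^ p * ‖η‖ ^ p / v ^ p := by
    rw [Real.div_rpow (by positivity) hv.le, Real.mul_rpow hu (norm_nonneg _)]
  have hcs : (inner ℝ η ξ : ℝ) ≤ ‖η‖ * ‖ξ‖ := real_inner_le_norm η ξ
  have key : ‖η‖ ^ (p - 2) * (p * u ^ (p - 1) / v ^ (p - 1) * (‖η‖ * ‖ξ‖)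
        - (p - 1) * u ^ p / v ^ p * ‖η‖ ^ 2)
      = p * (u ^ (p - 1) * ‖η‖ ^ (p - 1) / v ^ (p - 1)) * ‖ξ‖
        - (p - 1) * (u ^ p * ‖η‖ ^ p / v ^ p) := by
    rw [← e1, ← e2]; ring
  have hy := young_aux hp (norm_nonneg ξ) (show (0:ℝ) ≤ u * ‖η‖ / v by positivity)
  rw [hb1, hbp] at hy
  calc ‖η‖ ^ (p - 2) * (p * u ^ (p - 1) / v ^ (p - 1) * (inner ℝ η ξ : ℝ)
        - (p - 1) * u ^ p / v ^ p * ‖η‖ ^ 2)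
      ≤ ‖η‖ ^ (p - 2) * (p * u ^ (p - 1) / v ^ (p - 1) * (‖η‖ * ‖ξ‖)
        - (p - 1) * u ^ p / v ^ p * ‖η‖ ^ 2) := by
        have hc : (0:ℝ) ≤ ‖η‖ ^ (p - 2) * (p * u ^ (p - 1) / v ^ (p - 1)) := by positivity
        nlinarith [mul_le_mul_of_nonneg_left hcs hc]
    _ = p * (u ^ (p - 1) * ‖η‖ ^ (p - 1) / v ^ (p - 1)) * ‖ξ‖
        - (p - 1) * (u ^ p * ‖η‖ ^ p / v ^ p) := key
    _ ≤ ‖ξ‖ ^ p := by linarith
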